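/- With the Wigner bordering setup, let z ∈ ℝ with z ∉ {λ_1, …, λ_N} satisfy f(z) = 0. Then the vector w ∈ ℝ^{N+1} defined by w = Σ_{j=1}^N (g_j/(z − λ_j)) (u_j, 0) + e_{N+1} (where e_{N+1} is the last standard basis vector of ℝ^{N+1} and (u_j,0) is u_j extended by a zero last coordinate) is a nonzero eigenvector of H_{N+1} with eigenvalue z, and its squared Euclidean norm equals 1 + Σ_{j=1}^N g_j²/(z − λ_j)². -/

import Mathlib

open Matrix

/-- The bordered matrix `[[H, g], [gᵀ, a]]` of size `(N+1) × (N+1)`. -/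
def borderMatrix {N : ℕ} (H : Matrix (Fin N) (Fin N) ℝ) (g : Fin N → ℝ) (a : ℝ) :
    Matrix (Fin (N + 1)) (Fin (N + 1)) ℝ :=
  fun i => Fin.lastCases (Fin.snoc g a) (fun i' => Fin.snoc (H i') (g i')) i

/-- **Explicit eigenvector of the bordered matrix at a zero of the secular function.**
If `z ∉ {λ_1, …, λ_N}` satisfies `f(z) = 0`, then
`w = ∑ⱼ (gⱼ/(z - λⱼ)) (uⱼ, 0) + e_{N+1}` is a nonzero eigenvector of `H_{N+1}` with
eigenvalue `z`, and `‖w‖² = 1 + ∑ⱼ gⱼ²/(z - λⱼ)²`. -/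
theorem explicit_eigenvector_of_secular_zero
    (N : ℕ) (HN : Matrix (Fin N) (Fin N) ℝ) (hsymm : HN.IsSymm)
    (lam : Fin N → ℝ) (hmono : StrictMono lam)
    (u : Fin N → Fin N → ℝ)
    (heig : ∀ i, HN.mulVec (u i) = lam i • u i)
    (horth : ∀ i j, u i ⬝ᵥ u j = if i = j then (1 : ℝ) else 0)
    (g : Fin N → ℝ) (gN1 : ℝ)
    (z : ℝ) (hz : ∀ j, z ≠ lam j)
    (hroot : gN1 - z - ∑ j, (u j ⬝ᵥ g) ^ 2 / (lam j - z) = 0)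
    (w : Fin (N + 1) → ℝ)
    (hw : w = (∑ j, ((u j ⬝ᵥ g) / (z - lam j)) • (Fin.snoc (u j) 0 : Fin (N + 1) → ℝ)) +
        Pi.single (Fin.last N) (1 : ℝ)) :
    w ≠ 0 ∧ (borderMatrix HN g gN1).mulVec w = z • w ∧
      w ⬝ᵥ w = 1 + ∑ j, (u j ⬝ᵥ g) ^ 2 / (z - lam j) ^ 2 := by
  have hzl : ∀ k, z - lam k ≠ 0 := fun k => sub_ne_zero.mpr (hz k)
  set gj : Fin N → ℝ := fun j => u j ⬝ᵥ g with hgjdef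
  set c : Fin N → ℝ := fun j => gj j / (z - lam j) with hcdef
  have hck : ∀ k, c k * (z - lam k) = gj k := fun k => div_mul_cancel₀ _ (hzl k)
  -- completeness: ∑ j, gj j * u j i = g i
  have hcomp : ∀ i, ∑ j, gj j * u j i = g i := by
    intro i
    have hUU : (Matrix.of u) * (Matrix.of u)ᵀ = 1 := by
      ext a b
      simpa [Matrix.mul_apply, Matrix.one_apply, dotProduct] using horth a b
    have hUU' : (Matrix.of u)ᵀ * (Matrix.of u) = 1 := mul_eq_one_comm.mp hUU
    have h2 := congrArg (fun M : Matrix (Fin N) (Fin N) ℝ => (M.mulVec g) i) hUU'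
    simp only [Matrix.mulVec, Matrix.mul_apply, dotProduct, Matrix.transpose_apply,
      Matrix.of_apply, Matrix.one_apply, Finset.sum_mul] at h2
    have h3 : ∑ x, (if i = x then (1:ℝ) else 0) * g x = g i := by simp
    rw [h3] at h2
    rw [← h2, Finset.sum_comm]
    refine Finset.sum_congr rfl fun j _ => ?_
    show (∑ k, u j k * g k) * u j i = ∑ k, u j i * u j k * g k
    rw [Finset.sum_mul]
    exact Finset.sum_congr rfl fun k _ => by ring
  have hwlast : w (Fin.last N) = 1 := by
    simp [hw, Fin.snoc_last]
  have hwcast : ∀ i : Fin N, w (Fin.castSucc i) = ∑ j, c j * u j i := by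
    intro i
    simp [hw, Fin.snoc_castSucc, Pi.single_eq_of_ne (Fin.castSucc_lt_last i).ne]
    rfl
  refine ⟨?_, ?_, ?_⟩
  · intro h
    rw [h] at hwlast
    simp at hwlast
  · funext i
    induction i using Fin.lastCases with
    | last =>
      show (fun j => borderMatrix HN g gN1 (Fin.last N) j) ⬝ᵥ w = _
      have hrow : borderMatrix HN g gN1 (Fin.last N) = Fin.snoc g gN1 := by
        simp [borderMatrix]
      simp only [Matrix.mulVec, hrow, dotProduct, Pi.smul_apply, smul_eq_mul]
      rw [Fin.sum_univ_castSucc]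
      simp only [Fin.snoc_castSucc, Fin.snoc_last, hwlast, mul_one]
      have h1 : ∑ j : Fin N, g j * w (Fin.castSucc j) = ∑ k, gj k ^ 2 / (z - lam k) := by
        calc ∑ j : Fin N, g j * w (Fin.castSucc j)
            = ∑ j : Fin N, ∑ k, g j * (c k * u k j) := by
              refine Finset.sum_congr rfl fun j _ => ?_
              rw [hwcast j, Finset.mul_sum]
          _ = ∑ k, ∑ j : Fin N, g j * (c k * u k j) := Finset.sum_comm
          _ = ∑ k, c k * gj k := by
              refine Finset.sum_congr rfl fun k _ => ?_
              show _ = c k * ∑ j, u k j * g j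
              rw [Finset.mul_sum]
              exact Finset.sum_congr rfl fun j _ => by ring
          _ = ∑ k, gj k ^ 2 / (z - lam k) := by
              refine Finset.sum_congr rfl fun k _ => ?_
              show gj k / (z - lam k) * gj k = _
              rw [div_mul_eq_mul_div, ← sq]
      rw [h1]
      have h2 : ∑ j, gj j ^ 2 / (lam j - z) = -∑ j, gj j ^ 2 / (z - lam j) := by
        rw [← Finset.sum_neg_distrib]
        refine Finset.sum_congr rfl fun j _ => ?_
        rw [show lam j - z = -(z - lam j) by ring, div_neg]
      rw [h2] at hroot
      linarith
    | cast i =>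
      show (fun j => borderMatrix HN g gN1 (Fin.castSucc i) j) ⬝ᵥ w = _
      have hrow : borderMatrix HN g gN1 (Fin.castSucc i) = Fin.snoc (HN i) (g i) := by
        simp [borderMatrix]
      simp only [Matrix.mulVec, hrow, dotProduct, Pi.smul_apply, smul_eq_mul]
      rw [Fin.sum_univ_castSucc]
      simp only [Fin.snoc_castSucc, Fin.snoc_last, hwlast, mul_one, hwcast i]
      have h1 : ∑ j : Fin N, HN i j * w (Fin.castSucc j) = ∑ k, c k * (lam k * u k i) := by
        calc ∑ j : Fin N, HN i j * w (Fin.castSucc j)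
            = ∑ j : Fin N, ∑ k, HN i j * (c k * u k j) := by
              refine Finset.sum_congr rfl fun j _ => ?_
              rw [hwcast j, Finset.mul_sum]
          _ = ∑ k, ∑ j : Fin N, HN i j * (c k * u k j) := Finset.sum_comm
          _ = ∑ k, c k * ((HN.mulVec (u k)) i) := by
              refine Finset.sum_congr rfl fun k _ => ?_
              show _ = c k * ∑ j, HN i j * u k j
              rw [Finset.mul_sum]
              exact Finset.sum_congr rfl fun j _ => by ring
          _ = ∑ k, c k * (lam k * u k i) := by
              refine Finset.sum_congr rfl fun k _ => ?_
              rw [heig k]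
              rfl
      rw [h1, ← hcomp i]
      rw [Finset.mul_sum, ← Finset.sum_add_distrib]
      refine Finset.sum_congr rfl fun k _ => ?_
      rw [← hck k]
      ring
  · show ∑ i, w i * w i = _
    rw [Fin.sum_univ_castSucc, hwlast, mul_one]
    have h1 : ∑ i : Fin N, w (Fin.castSucc i) * w (Fin.castSucc i)
        = ∑ j, gj j ^ 2 / (z - lam j) ^ 2 := by
      calc ∑ i : Fin N, w (Fin.castSucc i) * w (Fin.castSucc i)
          = ∑ i : Fin N, ∑ j, ∑ k, (c j * u j i) * (c k * u k i) := by
            refine Finset.sum_congr rfl fun i _ => ?_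
            rw [hwcast i, Finset.sum_mul_sum]
        _ = ∑ j, ∑ k, (c j * c k) * ∑ i : Fin N, u j i * u k i := by
            rw [Finset.sum_comm]
            refine Finset.sum_congr rfl fun j _ => ?_
            rw [Finset.sum_comm]
            refine Finset.sum_congr rfl fun k _ => ?_
            rw [Finset.mul_sum]
            exact Finset.sum_congr rfl fun i _ => by ring
        _ = ∑ j, ∑ k, (c j * c k) * (if j = k then (1:ℝ) else 0) := by
            refine Finset.sum_congr rfl fun j _ => Finset.sum_congr rfl fun k _ => ?_
            rw [show ∑ i : Fin N, u j i * u k i = u j ⬝ᵥ u k from rfl, horth j k]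
        _ = ∑ j, c j * c j := by
            refine Finset.sum_congr rfl fun j _ => ?_
            simp
        _ = ∑ j, gj j ^ 2 / (z - lam j) ^ 2 := by
            refine Finset.sum_congr rfl fun j _ => ?_
            show gj j / (z - lam j) * (gj j / (z - lam j)) = _
            rw [div_mul_div_comm, ← sq, ← sq]
    rw [h1]
    ring
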